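/- Let W be a compact oriented manifold of even dimension 2n with boundary N, and suppose the restriction maps H^i(W;ℚ) → H^i(N;ℚ) are surjective for all i ≤ n−1 and vanish identically for all i with n ≤ i ≤ 2n−1. If i₁,...,i_k ∈ {1,...,n−1} satisfy i₁+⋯+i_k ≥ n, then the cup product map H^{i₁}(N;ℚ) ⊗ ⋯ ⊗ H^{i_k}(N;ℚ) → H^{i₁+⋯+i_k}(N;ℚ) vanishes identically. -/
import Mathlib

/-- key step of the Durfee–Hain theorem.
Let `W` be a compact oriented `2n`-manifold with boundary `N`.  Rational coefficients
throughout: the cohomology rings `H^*(W;ℚ)`, `H^*(N;ℚ)` are encoded as graded `ℚ`-algebras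
and the restriction map as a degree-preserving algebra homomorphism `b`.  Assume the
Goresky–MacPherson property: `b` is surjective in every degree `i ≤ n-1` and vanishes
identically in every degree `i` with `n ≤ i ≤ 2n-1` (moreover `H^j(N;ℚ) = 0` for
`j ≥ 2n`, since `N` is a closed `(2n-1)`-manifold).  If `i₁,…,i_k ∈ {1,…,n-1}` satisfy
`i₁+⋯+i_k ≥ n`, then the cup product map
`H^{i₁}(N;ℚ) ⊗ ⋯ ⊗ H^{i_k}(N;ℚ) → H^{i₁+⋯+i_k}(N;ℚ)` vanishes identically. -/
theorem statement8
    (n : ℕ) (hn : 1 ≤ n)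
    (HW HN : Type) [Ring HW] [Ring HN] [Algebra ℚ HW] [Algebra ℚ HN]
    (𝒲 : ℕ → Submodule ℚ HW) (𝒩 : ℕ → Submodule ℚ HN)
    [GradedAlgebra 𝒲] [GradedAlgebra 𝒩]
    (b : HW →ₐ[ℚ] HN)
    (hb : ∀ j, ∀ x ∈ 𝒲 j, b x ∈ 𝒩 j)
    (hsurj : ∀ j, j ≤ n - 1 → ∀ y ∈ 𝒩 j, ∃ x ∈ 𝒲 j, b x = y)
    (hvan : ∀ j, n ≤ j → j ≤ 2 * n - 1 → ∀ x ∈ 𝒲 j, b x = 0)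
    -- N is a closed (2n-1)-manifold, so its cohomology vanishes above degree 2n-1
    (hNtop : ∀ j, 2 * n ≤ j → 𝒩 j = ⊥)
    (k : ℕ) (i : Fin k → ℕ)
    (hil : ∀ l, 1 ≤ i l) (hiu : ∀ l, i l ≤ n - 1)
    (hsum : n ≤ ∑ l, i l)
    (x : Fin k → HN) (hx : ∀ l, x l ∈ 𝒩 (i l)) :
    (List.ofFn x).prod = 0 := by
  set m := ∑ l, i l with hm
  by_cases hbig : 2 * n ≤ m
  · -- the product lies in 𝒩 m = ⊥
    have hmem : (List.ofFn x).prod ∈ 𝒩 m := by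
      have := SetLike.list_prod_ofFn_mem_graded (A := 𝒩) i x hx
      rwa [List.sum_ofFn] at this
    rw [hNtop m hbig] at hmem
    simpa using hmem
  · -- lift each factor to W and use vanishing in degree m
    choose y hy hby using fun l => hsurj (i l) (le_trans (hiu l) le_rfl) (x l) (hx l)
    have hmemW : (List.ofFn y).prod ∈ 𝒲 m := by
      have := SetLike.list_prod_ofFn_mem_graded (A := 𝒲) i y hy
      rwa [List.sum_ofFn] at this
    have hbx : b (List.ofFn y).prod = (List.ofFn x).prod := by
      rw [map_list_prod]
      congr 1
      simp only [List.map_ofFn]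
      exact congrArg List.ofFn (funext fun l => hby l)
    rw [← hbx]
    exact hvan m hsum (by omega) _ hmemW
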